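/- For every integer n, every natural number k, every natural number j with j < k, and every positive integer N: T^j(N) is odd if and only if F_n^j(N + A_n) is even; consequently the parity vector (i_0(N), …, i_{k-1}(N)) of the Collatz sequence equals the vector (f_{n,0}(N + A_n), …, f_{n,k-1}(N + A_n)), where i_j(N) = 1 if T^j(N) is odd and 0 otherwise, and f_{n,j}(P) = 1 if F_n^j(P) is even and 0 otherwise. -/

import Mathlib

def T (N : ℤ) : ℤ := if Even N then N / 2 else (3 * N + 1) / 2

def F (n : ℤ) (P : ℤ) : ℤ := if Even P then (3 * P - 2 * n) / 2 else (P + 2 * n + 1) / 2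

def A (n : ℤ) : ℤ := 2 * n + 1

/-- Parity indicator of the Collatz sequence: 1 if `T^[j] N` is odd, else 0. -/
def iInd (j : ℕ) (N : ℤ) : ℕ := if Odd (T^[j] N) then 1 else 0

/-- Parity indicator for `F n`: 1 if `(F n)^[j] P` is even, else 0. -/
def fInd (n : ℤ) (j : ℕ) (P : ℤ) : ℕ := if Even ((F n)^[j] P) then 1 else 0

lemma F_shift (n M : ℤ) : F n (M + A n) = T M + A n := by
  unfold F T A
  by_cases h : Even M
  · have h2 : ¬ Even (M + (2*n+1)) := by
      simpa [Int.even_add_one, parity_simps, ← Int.not_even_iff_odd] using h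
    rw [if_neg h2, if_pos h]
    obtain ⟨m, hm⟩ := h
    subst hm
    ring_nf
    omega
  · have h2 : Even (M + (2*n+1)) := by
      simpa [Int.even_add_one, parity_simps, ← Int.not_even_iff_odd] using h
    rw [if_pos h2, if_neg h]
    obtain ⟨m, hm⟩ := Int.not_even_iff_odd.mp h
    subst hm
    ring_nf
    omega

lemma iter_shift (n M : ℤ) (j : ℕ) : (F n)^[j] (M + A n) = T^[j] M + A n := by
  induction j with
  | zero => simp
  | succ j ih => rw [Function.iterate_succ_apply', ih, F_shift, Function.iterate_succ_apply']

theorem stmt_19 (n : ℤ) (k : ℕ) (N : ℤ) (hN : 0 < N) :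
    (∀ j : ℕ, j < k → (Odd (T^[j] N) ↔ Even ((F n)^[j] (N + A n)))) ∧
    (fun j : Fin k => iInd j N) = (fun j : Fin k => fInd n j (N + A n)) := by
  have key : ∀ j : ℕ, Odd (T^[j] N) ↔ Even ((F n)^[j] (N + A n)) := by
    intro j
    rw [iter_shift]
    unfold A
    constructor
    · rintro ⟨m, hm⟩; exact ⟨m + n + 1, by omega⟩
    · rintro ⟨m, hm⟩; exact ⟨m - n - 1, by omega⟩
  refine ⟨fun j _ => key j, ?_⟩
  funext j
  unfold iInd fInd
  rw [if_congr (key j) rfl rfl]
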